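/- arXiv:1611.10260 — 3 statements merged into one kernel-verified Lean document; each statement's English description precedes it below -/
import Mathlib

section
/- For any t > 0 and R > 0, the limit as ε → 0⁺ of ∫_ε^t ∫_{B_R} ∂₁²K(y,τ) dy dτ equals -½ e^{-R²/(4t)}, where B_R is the ball of radius R centered at the origin in ℝ². -/
open Real MeasureTheory Filter

private lemma hk_rad_integral (τ R : ℝ) (hτ : 0 < τ) :
    ∫ r in (0:ℝ)..R, r / (4*τ^2) * (r^2/(4*τ) - 1) * Real.exp (-r^2/(4*τ))
      = -(R^2/(8*τ^2)) * Real.exp (-R^2/(4*τ)) := by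
  have hd : ∀ r : ℝ, HasDerivAt (fun r : ℝ => -(r^2/(8*τ^2)) * Real.exp (-r^2/(4*τ)))
      (r / (4*τ^2) * (r^2/(4*τ) - 1) * Real.exp (-r^2/(4*τ))) r := by
    intro r
    have h1 : HasDerivAt (fun r : ℝ => -(r^2/(8*τ^2))) (-(2*r/(8*τ^2))) r := by
      have := ((hasDerivAt_pow 2 r).div_const (8*τ^2)).neg
      simp at this; exact this
    have h2 : HasDerivAt (fun r : ℝ => -r^2/(4*τ)) (-(2*r)/(4*τ)) r := by
      have := (((hasDerivAt_pow 2 r).neg).div_const (4*τ))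
      simpa using this
    have h3 := h2.exp
    have := h1.mul h3
    refine this.congr_deriv ?_
    ring
  have hcont : Continuous fun r : ℝ => r / (4*τ^2) * (r^2/(4*τ) - 1) * Real.exp (-r^2/(4*τ)) := by
    continuity
  rw [intervalIntegral.integral_eq_sub_of_hasDerivAt (fun r _ => hd r)
    (hcont.intervalIntegrable _ _)]
  norm_num

private lemma hk_outer_integral (t R ε : ℝ) (ht : 0 < t) (hε : 0 < ε) :
    ∫ τ in ε..t, -(R^2/(8*τ^2)) * Real.exp (-R^2/(4*τ))
      = -(1/2) * Real.exp (-R^2/(4*t)) + (1/2) * Real.exp (-R^2/(4*ε)) := by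
  have hd : ∀ τ : ℝ, τ ≠ 0 → HasDerivAt (fun τ : ℝ => -(1/2) * Real.exp (-R^2/(4*τ)))
      (-(R^2/(8*τ^2)) * Real.exp (-R^2/(4*τ))) τ := by
    intro τ hτ
    have h1 : HasDerivAt (fun τ : ℝ => -R^2/(4*τ)) (R^2/(4*τ^2)) τ := by
      have h2 := (hasDerivAt_inv hτ).const_mul (-R^2/4)
      have e1 : (fun y:ℝ => -R^2/4 * y⁻¹) = fun y => -R^2/(4*y) := by funext y; ring
      have e2 : -R^2/4 * -(τ^2)⁻¹ = R^2/(4*τ^2) := by field_simp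
      rw [e1, e2] at h2; exact h2
    have h3 := (h1.exp).const_mul (-(1/2 : ℝ))
    refine h3.congr_deriv ?_
    ring
  have hpos : ∀ τ ∈ Set.uIcc ε t, (0:ℝ) < τ := by
    intro τ hτm
    rcases Set.mem_uIcc.mp hτm with h | h
    · linarith [h.1]
    · linarith [h.1]
  have hne : ∀ τ ∈ Set.uIcc ε t, (4:ℝ)*τ ≠ 0 := fun τ hτ => by
    have := hpos τ hτ; positivity
  have hcont : ContinuousOn (fun τ : ℝ => -(R^2/(8*τ^2)) * Real.exp (-R^2/(4*τ)))
      (Set.uIcc ε t) := by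
    apply ContinuousOn.mul
    · apply ContinuousOn.neg
      apply ContinuousOn.div continuousOn_const (by fun_prop)
      intro τ hτ; have := hpos τ hτ; positivity
    · apply Real.continuous_exp.comp_continuousOn
      exact ContinuousOn.div continuousOn_const (by fun_prop) hne
  rw [intervalIntegral.integral_eq_sub_of_hasDerivAt
    (fun τ hτ => hd τ (hpos τ hτ).ne') (hcont.intervalIntegrable)]
  ring

private lemma hk_step_transfer (τ R : ℝ) (hR : 0 < R) :
    ∫ y in Metric.closedBall (0 : EuclideanSpace ℝ (Fin 2)) R,
      (1 / (8 * π * τ ^ 2)) * ((y 0) ^ 2 / (2 * τ) - 1) * Real.exp (-‖y‖ ^ 2 / (4 * τ))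
    = ∫ p in {p : ℝ × ℝ | p.1^2 + p.2^2 ≤ R^2},
        (1 / (8 * π * τ ^ 2)) * (p.1 ^ 2 / (2 * τ) - 1) *
          Real.exp (-(p.1^2 + p.2^2) / (4 * τ)) := by
  set ψ : EuclideanSpace ℝ (Fin 2) ≃ᵐ ℝ × ℝ :=
    (MeasurableEquiv.toLp 2 (Fin 2 → ℝ)).symm.trans (MeasurableEquiv.finTwoArrow)
  have hψ : MeasurePreserving ψ := by
    have := (volume_preserving_finTwoArrow ℝ).comp
      (PiLp.volume_preserving_ofLp (Fin 2))
    simpa [ψ, MeasurableEquiv.coe_trans, MeasurableEquiv.coe_toLp_symm] using this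
  have hnorm : ∀ y : EuclideanSpace ℝ (Fin 2), ‖y‖^2 = (y 0)^2 + (y 1)^2 := by
    intro y
    rw [EuclideanSpace.norm_eq, Real.sq_sqrt (by positivity)]
    simp [Fin.sum_univ_two, sq_abs]
  have hball : ψ ⁻¹' {p : ℝ × ℝ | p.1^2 + p.2^2 ≤ R^2}
      = Metric.closedBall (0 : EuclideanSpace ℝ (Fin 2)) R := by
    ext y
    simp only [Set.mem_preimage, Set.mem_setOf_eq, Metric.mem_closedBall, dist_zero_right]
    have hψy : ψ y = (y 0, y 1) := rfl
    rw [hψy]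
    constructor
    · intro h
      have : ‖y‖^2 ≤ R^2 := by rw [hnorm]; exact h
      nlinarith [norm_nonneg y]
    · intro h
      rw [← hnorm]
      nlinarith [norm_nonneg y]
  rw [← (hψ.setIntegral_preimage_emb ψ.measurableEmbedding) _ _, hball]
  apply setIntegral_congr_fun (Metric.isClosed_closedBall.measurableSet)
  intro y _
  have hψy : ψ y = (y 0, y 1) := rfl
  simp only [hψy, hnorm y]

private lemma hk_step_polar (τ R : ℝ) (hR : 0 < R) :
    ∫ p in {p : ℝ × ℝ | p.1^2 + p.2^2 ≤ R^2},
        (1 / (8 * π * τ ^ 2)) * (p.1 ^ 2 / (2 * τ) - 1) *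
          Real.exp (-(p.1^2 + p.2^2) / (4 * τ))
    = ∫ p in Set.Ioc 0 R ×ˢ Set.Ioo (-π) π,
        p.1 * ((1 / (8 * π * τ ^ 2)) * ((p.1 * Real.cos p.2) ^ 2 / (2 * τ) - 1) *
          Real.exp (-p.1^2 / (4 * τ))) := by
  set g : ℝ × ℝ → ℝ := fun p =>
    (1 / (8 * π * τ ^ 2)) * (p.1 ^ 2 / (2 * τ) - 1) *
      Real.exp (-(p.1^2 + p.2^2) / (4 * τ)) with hgdef
  set h : ℝ × ℝ → ℝ := fun p =>
    p.1 * ((1 / (8 * π * τ ^ 2)) * ((p.1 * Real.cos p.2) ^ 2 / (2 * τ) - 1) *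
      Real.exp (-p.1^2 / (4 * τ))) with hhdef
  set T : Set (ℝ × ℝ) := {p | p.1^2 + p.2^2 ≤ R^2} with hTdef
  have hTm : MeasurableSet T := by
    have : T = (fun p : ℝ × ℝ => p.1^2 + p.2^2) ⁻¹' Set.Iic (R^2) := rfl
    rw [this]
    exact (by fun_prop : Continuous fun p : ℝ × ℝ => p.1^2 + p.2^2).measurable
      measurableSet_Iic
  have hSsub : Set.Ioc 0 R ×ˢ Set.Ioo (-π) π ⊆ polarCoord.target := by
    rw [polarCoord_target]
    exact Set.prod_mono Set.Ioc_subset_Ioi_self le_rfl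
  have key : ∀ p ∈ polarCoord.target,
      p.1 • (T.indicator g) (polarCoord.symm p)
        = (Set.Ioc 0 R ×ˢ Set.Ioo (-π) π).indicator h p := by
    rintro ⟨r, θ⟩ hp
    rw [polarCoord_target] at hp
    obtain ⟨hr, hθ⟩ := hp
    simp only [Set.mem_Ioi] at hr
    have hsymm : polarCoord.symm (r, θ) = (r * Real.cos θ, r * Real.sin θ) := rfl
    have hsq : (r * Real.cos θ)^2 + (r * Real.sin θ)^2 = r^2 := by
      have := Real.sin_sq_add_cos_sq θ; nlinarith
    by_cases hle : r ≤ R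
    · have h1 : polarCoord.symm (r, θ) ∈ T := by
        rw [hsymm, hTdef]
        simp only [Set.mem_setOf_eq]
        rw [hsq]
        nlinarith
      have h2 : (r, θ) ∈ Set.Ioc 0 R ×ˢ Set.Ioo (-π) π := ⟨⟨hr, hle⟩, hθ⟩
      rw [Set.indicator_of_mem h1, Set.indicator_of_mem h2, hsymm]
      simp only [smul_eq_mul, hgdef, hhdef, hsq]
    · have h1 : polarCoord.symm (r, θ) ∉ T := by
        rw [hsymm, hTdef]
        simp only [Set.mem_setOf_eq, not_le]
        rw [hsq]
        nlinarith
      have h2 : (r, θ) ∉ Set.Ioc 0 R ×ˢ Set.Ioo (-π) π := by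
        intro hc; exact hle hc.1.2
      rw [Set.indicator_of_notMem h1, Set.indicator_of_notMem h2, smul_zero]
  calc ∫ p in T, g p = ∫ p, T.indicator g p := (integral_indicator hTm).symm
    _ = ∫ p in polarCoord.target, p.1 • (T.indicator g) (polarCoord.symm p) :=
        (integral_comp_polarCoord_symm (T.indicator g)).symm
    _ = ∫ p in polarCoord.target,
          (Set.Ioc 0 R ×ˢ Set.Ioo (-π) π).indicator h p := by
        apply setIntegral_congr_fun polarCoord.open_target.measurableSet key
    _ = ∫ p in polarCoord.target ∩ (Set.Ioc 0 R ×ˢ Set.Ioo (-π) π), h p := by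
        rw [setIntegral_indicator ((measurableSet_Ioc.prod measurableSet_Ioo))]
    _ = ∫ p in Set.Ioc 0 R ×ˢ Set.Ioo (-π) π, h p := by
        rw [Set.inter_eq_self_of_subset_right hSsub]

private lemma hk_step_fubini (τ R : ℝ) :
    ∫ p in Set.Ioc 0 R ×ˢ Set.Ioo (-π) π,
        p.1 * ((1 / (8 * π * τ ^ 2)) * ((p.1 * Real.cos p.2) ^ 2 / (2 * τ) - 1) *
          Real.exp (-p.1^2 / (4 * τ)))
    = ∫ r in Set.Ioc (0:ℝ) R, ∫ θ in Set.Ioo (-π) π,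
        r * ((1 / (8 * π * τ ^ 2)) * ((r * Real.cos θ) ^ 2 / (2 * τ) - 1) *
          Real.exp (-r^2 / (4 * τ))) := by
  have hcont : Continuous fun p : ℝ × ℝ =>
      p.1 * ((1 / (8 * π * τ ^ 2)) * ((p.1 * Real.cos p.2) ^ 2 / (2 * τ) - 1) *
        Real.exp (-p.1^2 / (4 * τ))) := by fun_prop
  have hint : IntegrableOn (fun p : ℝ × ℝ =>
      p.1 * ((1 / (8 * π * τ ^ 2)) * ((p.1 * Real.cos p.2) ^ 2 / (2 * τ) - 1) *
        Real.exp (-p.1^2 / (4 * τ)))) (Set.Ioc 0 R ×ˢ Set.Ioo (-π) π) := by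
    apply IntegrableOn.mono_set
      (hcont.continuousOn.integrableOn_compact (isCompact_Icc.prod isCompact_Icc))
    exact Set.prod_mono Set.Ioc_subset_Icc_self Set.Ioo_subset_Icc_self
  exact setIntegral_prod _ hint

private lemma hk_theta_integral (τ r : ℝ) (hτ : 0 < τ) :
    ∫ θ in Set.Ioo (-π) π,
        r * ((1 / (8 * π * τ ^ 2)) * ((r * Real.cos θ) ^ 2 / (2 * τ) - 1) *
          Real.exp (-r^2 / (4 * τ)))
    = r / (4*τ^2) * (r^2/(4*τ) - 1) * Real.exp (-r^2/(4*τ)) := by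
  set E := Real.exp (-r^2 / (4 * τ)) with hE
  set A := r * (1 / (8 * π * τ ^ 2)) * (r^2 / (2 * τ)) * E with hA
  set B := -(r * (1 / (8 * π * τ ^ 2)) * E) with hB
  have heq : ∀ θ : ℝ, r * ((1 / (8 * π * τ ^ 2)) * ((r * Real.cos θ) ^ 2 / (2 * τ) - 1) *
      Real.exp (-r^2 / (4 * τ))) = A * Real.cos θ ^ 2 + B := by
    intro θ; rw [hA, hB, hE]; ring
  simp_rw [hE, heq]
  rw [← integral_Ioc_eq_integral_Ioo,
    ← intervalIntegral.integral_of_le (by linarith [Real.pi_pos] : -π ≤ π)]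
  rw [intervalIntegral.integral_add
    ((by fun_prop : Continuous fun θ : ℝ => A * Real.cos θ ^ 2).intervalIntegrable _ _)
    (intervalIntegrable_const),
    intervalIntegral.integral_const_mul, integral_cos_sq, intervalIntegral.integral_const]
  simp only [Real.sin_pi, Real.cos_pi, Real.sin_neg, Real.cos_neg, smul_eq_mul]
  rw [hA, hB, hE]
  have hπ := Real.pi_ne_zero
  field_simp
  ring

private lemma hk_inner_integral (τ R : ℝ) (hτ : 0 < τ) (hR : 0 < R) :
    ∫ y in Metric.closedBall (0 : EuclideanSpace ℝ (Fin 2)) R,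
      (1 / (8 * π * τ ^ 2)) * ((y 0) ^ 2 / (2 * τ) - 1) * Real.exp (-‖y‖ ^ 2 / (4 * τ))
    = -(R^2/(8*τ^2)) * Real.exp (-R^2/(4*τ)) := by
  rw [hk_step_transfer τ R hR, hk_step_polar τ R hR, hk_step_fubini τ R]
  have : ∀ r ∈ Set.Ioc (0:ℝ) R, (∫ θ in Set.Ioo (-π) π,
      r * ((1 / (8 * π * τ ^ 2)) * ((r * Real.cos θ) ^ 2 / (2 * τ) - 1) *
        Real.exp (-r^2 / (4 * τ))))
      = r / (4*τ^2) * (r^2/(4*τ) - 1) * Real.exp (-r^2/(4*τ)) :=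
    fun r _ => hk_theta_integral τ r hτ
  rw [setIntegral_congr_fun measurableSet_Ioc this,
    ← intervalIntegral.integral_of_le hR.le, hk_rad_integral τ R hτ]

/-- For any `t > 0` and `R > 0`, the limit as `ε → 0⁺` of
`∫_ε^t ∫_{B_R} ∂₁²K(y,τ) dy dτ` equals `-½ e^{-R²/(4t)}`, where
`∂₁²K(y,τ) = (1/(8πτ²))((y₁²/(2τ)) - 1) e^{-|y|²/(4τ)}` and `B_R` is the centered ball of
radius `R` in `ℝ²`. -/
theorem heat_kernel_time_space_cancellation (t R : ℝ) (ht : 0 < t) (hR : 0 < R) :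
    Tendsto (fun ε : ℝ =>
        ∫ τ in ε..t, ∫ y in Metric.closedBall (0 : EuclideanSpace ℝ (Fin 2)) R,
          (1 / (8 * π * τ ^ 2)) * ((y 0) ^ 2 / (2 * τ) - 1) * Real.exp (-‖y‖ ^ 2 / (4 * τ)))
      (nhdsWithin 0 (Set.Ioi 0))
      (nhds (-(1 / 2) * Real.exp (-R ^ 2 / (4 * t)))) := by
  have hF : ∀ ε ∈ Set.Ioi (0:ℝ),
      (∫ τ in ε..t, ∫ y in Metric.closedBall (0 : EuclideanSpace ℝ (Fin 2)) R,
        (1 / (8 * π * τ ^ 2)) * ((y 0) ^ 2 / (2 * τ) - 1) * Real.exp (-‖y‖ ^ 2 / (4 * τ)))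
      = -(1/2) * Real.exp (-R^2/(4*t)) + (1/2) * Real.exp (-R^2/(4*ε)) := by
    intro ε hε
    rw [Set.mem_Ioi] at hε
    have hcongr : ∀ τ ∈ Set.uIcc ε t,
        (∫ y in Metric.closedBall (0 : EuclideanSpace ℝ (Fin 2)) R,
          (1 / (8 * π * τ ^ 2)) * ((y 0) ^ 2 / (2 * τ) - 1) * Real.exp (-‖y‖ ^ 2 / (4 * τ)))
        = -(R^2/(8*τ^2)) * Real.exp (-R^2/(4*τ)) := by
      intro τ hτm
      have hτ : 0 < τ := by
        rcases Set.mem_uIcc.mp hτm with h | h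
        · linarith [h.1]
        · linarith [h.1]
      exact hk_inner_integral τ R hτ hR
    rw [intervalIntegral.integral_congr hcongr, hk_outer_integral t R ε ht hε]
  have hlim : Tendsto (fun ε : ℝ =>
      -(1/2) * Real.exp (-R^2/(4*t)) + (1/2) * Real.exp (-R^2/(4*ε)))
      (nhdsWithin 0 (Set.Ioi 0)) (nhds (-(1/2) * Real.exp (-R^2/(4*t)) + (1/2) * 0)) := by
    apply Tendsto.add tendsto_const_nhds
    apply Tendsto.const_mul
    have h1 : Tendsto (fun ε : ℝ => R^2/(4*ε)) (nhdsWithin 0 (Set.Ioi 0)) atTop := by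
      have h2 : Tendsto (fun ε : ℝ => R^2/4 * ε⁻¹) (nhdsWithin 0 (Set.Ioi 0)) atTop :=
        Tendsto.const_mul_atTop (by positivity) tendsto_inv_nhdsGT_zero
      refine h2.congr fun ε => by ring
    have h3 := Real.tendsto_exp_neg_atTop_nhds_zero.comp h1
    refine h3.congr fun ε => by rw [Function.comp_apply, neg_div]
  have : -(1 / 2 : ℝ) * Real.exp (-R ^ 2 / (4 * t))
      = -(1/2) * Real.exp (-R^2/(4*t)) + (1/2) * 0 := by ring
  rw [this]
  apply hlim.congr'
  filter_upwards [self_mem_nhdsWithin] with ε hε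
  exact (hF ε hε).symm
end

section
/- For x ∈ ℝ², x ≠ 0, and t > 0, the gradient-type identity ∂₁ of the function Φ(x,t) = (1/(2π))( log|x| + (1/2)∫_{|x|²/(4t)}^∞ (e^{-z}/z) dz ) equals (1/(2π)) (x₁/|x|²) (1 - e^{-|x|²/(4t)}). -/
open Real MeasureTheory

lemma expz_integrableOn {c : ℝ} (hc : 0 < c) :
    MeasureTheory.IntegrableOn (fun z => Real.exp (-z) / z) (Set.Ioi c) := by
  have hmeas : MeasureTheory.AEStronglyMeasurable (fun z => Real.exp (-z) / z)
      (MeasureTheory.volume.restrict (Set.Ioi c)) :=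
    ((Real.continuous_exp.comp continuous_neg).measurable.div measurable_id).aestronglyMeasurable
  refine MeasureTheory.Integrable.mono'
    (((exp_neg_integrableOn_Ioi c one_pos)).const_mul (1 / c)) hmeas ?_
  refine (MeasureTheory.ae_restrict_iff' measurableSet_Ioi).2 (Filter.Eventually.of_forall ?_)
  intro z hz
  have hz0 : 0 < z := hc.trans hz
  rw [Real.norm_eq_abs, abs_of_nonneg (by positivity)]
  rw [div_le_iff₀ hz0] at *
  have : Real.exp (-z) ≤ 1 / c * Real.exp (-1 * z) * z := by
    rw [neg_one_mul]
    have : (1:ℝ) ≤ 1 / c * z := by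
      have h := one_div_pos.2 hc
      calc (1:ℝ) = 1/c * c := by field_simp
        _ ≤ 1/c * z := by have hcz : c < z := hz; nlinarith
    nlinarith [Real.exp_pos (-z)]
  linarith

lemma hasDerivAt_expz_tail {s : ℝ} (hs : 0 < s) :
    HasDerivAt (fun u => ∫ z in Set.Ioi u, Real.exp (-z) / z) (-(Real.exp (-s) / s)) s := by
  have h2 : 0 < s / 2 := half_pos hs
  have hint := expz_integrableOn h2
  have key : ∀ u, s / 2 < u → (∫ z in Set.Ioi u, Real.exp (-z) / z)
      = (∫ z in Set.Ioi (s / 2), Real.exp (-z) / z)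
        - ∫ z in (s / 2)..u, Real.exp (-z) / z := by
    intro u hu
    have hsplit : (∫ z in Set.Ioi (s / 2), Real.exp (-z) / z)
        = (∫ z in Set.Ioc (s / 2) u, Real.exp (-z) / z)
          + ∫ z in Set.Ioi u, Real.exp (-z) / z := by
      rw [← MeasureTheory.setIntegral_union (Set.Ioc_disjoint_Ioi le_rfl) measurableSet_Ioi
        (hint.mono_set Set.Ioc_subset_Ioi_self) (hint.mono_set (Set.Ioi_subset_Ioi hu.le)),
        Set.Ioc_union_Ioi_eq_Ioi hu.le]
    rw [intervalIntegral.integral_of_le hu.le]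
    linarith
  have hii : IntervalIntegrable (fun z => Real.exp (-z) / z) volume (s / 2) s := by
    rw [intervalIntegrable_iff_integrableOn_Ioc_of_le (by linarith)]
    exact hint.mono_set Set.Ioc_subset_Ioi_self
  have hmeas : StronglyMeasurableAtFilter (fun z => Real.exp (-z) / z) (nhds s) volume :=
    ((Real.continuous_exp.comp continuous_neg).measurable.div
      measurable_id).stronglyMeasurable.stronglyMeasurableAtFilter
  have hcont : ContinuousAt (fun z => Real.exp (-z) / z) s :=
    ((Real.continuous_exp.comp continuous_neg).continuousAt).div continuousAt_id hs.ne'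
  have hd := (intervalIntegral.integral_hasDerivAt_right hii hmeas hcont).const_sub
    (∫ z in Set.Ioi (s / 2), Real.exp (-z) / z)
  refine hd.congr_of_eventuallyEq ?_ |>.congr_deriv rfl
  filter_upwards [eventually_gt_nhds (by linarith : s / 2 < s)] with u hu
  exact key u hu

/-- For `x = (x₁,x₂) ∈ ℝ²`, `x ≠ 0`, and `t > 0`, the partial derivative in `x₁` of
`Φ(x,t) = (1/(2π))( log|x| + (1/2)∫_{|x|²/(4t)}^∞ e^{-z}/z dz )` equals
`(1/(2π)) (x₁/|x|²) (1 - e^{-|x|²/(4t)})`. -/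
theorem deriv_heat_laplace_potential (x₁ x₂ t : ℝ) (hx : ¬(x₁ = 0 ∧ x₂ = 0)) (ht : 0 < t) :
    deriv (fun a : ℝ => (1 / (2 * π)) * (Real.log (Real.sqrt (a ^ 2 + x₂ ^ 2))
        + (1 / 2) * ∫ z in Set.Ioi ((a ^ 2 + x₂ ^ 2) / (4 * t)), Real.exp (-z) / z)) x₁
      = (1 / (2 * π)) * (x₁ / (x₁ ^ 2 + x₂ ^ 2))
          * (1 - Real.exp (-(x₁ ^ 2 + x₂ ^ 2) / (4 * t))) := by
  have hr : 0 < x₁ ^ 2 + x₂ ^ 2 := by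
    rcases eq_or_ne x₁ 0 with h1 | h1
    · have h2 : x₂ ≠ 0 := fun h2 => hx ⟨h1, h2⟩
      positivity
    · positivity
  set r2 : ℝ := x₁ ^ 2 + x₂ ^ 2 with hr2
  set s : ℝ := r2 / (4 * t) with hs
  have hspos : 0 < s := by positivity
  -- inner function
  have hinner : HasDerivAt (fun a : ℝ => (a ^ 2 + x₂ ^ 2) / (4 * t)) (x₁ / (2 * t)) x₁ := by
    have := ((hasDerivAt_pow 2 x₁).add_const (x₂ ^ 2)).div_const (4 * t)
    exact this.congr_deriv (by ring)
  -- log part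
  have hlog : HasDerivAt (fun a : ℝ => Real.log (Real.sqrt (a ^ 2 + x₂ ^ 2)))
      (x₁ / r2) x₁ := by
    have heq : (fun a : ℝ => Real.log (Real.sqrt (a ^ 2 + x₂ ^ 2)))
        = fun a : ℝ => Real.log (a ^ 2 + x₂ ^ 2) / 2 := by
      funext a
      rw [Real.log_sqrt (by positivity)]
    rw [heq]
    have hin : HasDerivAt (fun a : ℝ => a ^ 2 + x₂ ^ 2) (2 * x₁) x₁ := by
      have := (hasDerivAt_pow 2 x₁).add_const (x₂ ^ 2)
      exact this.congr_deriv (by ring)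
    have := ((Real.hasDerivAt_log hr.ne').comp x₁ hin).div_const 2
    refine this.congr_deriv ?_
    field_simp [hr2]
  -- integral part
  have hG : HasDerivAt (fun a : ℝ =>
      (1 / 2) * ∫ z in Set.Ioi ((a ^ 2 + x₂ ^ 2) / (4 * t)), Real.exp (-z) / z)
      ((1 / 2) * (-(Real.exp (-s) / s) * (x₁ / (2 * t)))) x₁ := by
    exact (((hasDerivAt_expz_tail hspos).comp x₁ hinner)).const_mul (1 / 2)
  have htot := ((hlog.add hG).const_mul (1 / (2 * π)))
  refine htot.deriv.trans ?_
  have ht' : (4 * t) ≠ 0 := by positivity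
  have hsne : s ≠ 0 := hspos.ne'
  have hexp : Real.exp (-r2 / (4 * t)) = Real.exp (-s) := by
    rw [hs, neg_div]
  rw [hexp]
  field_simp [hs, hr2] at *
  rw [← hs]
  ring
end

section
/- For a U-Lipschitz function d : [0,t] → ℝ with min value ε > 0 and d(t) ≤ 2ε, the bound ∫₀^t (d(t-τ)²/(8τ²)) e^{-d(t-τ)²/(4τ)} dτ ≤ 4 + (U²/4) t holds. -/
open Real MeasureTheory

lemma sq_mul_exp_neg_le_four (x : ℝ) (hx : 0 ≤ x) : x ^ 2 * Real.exp (-x) ≤ 4 := by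
  have h := Real.add_one_le_exp (x / 2)
  have h2 : Real.exp (x / 2) * Real.exp (x / 2) = Real.exp x := by
    rw [← Real.exp_add]; ring_nf
  have hexp : 0 < Real.exp x := Real.exp_pos x
  rw [Real.exp_neg, ← div_eq_mul_inv, div_le_iff₀ hexp]
  nlinarith [h, h2, hx]

set_option maxHeartbeats 1000000 in
/-- For a `U`-Lipschitz function `d : [0,t] → ℝ` with minimum value `ε > 0` and `d t ≤ 2ε`,
`∫₀^t (d(t-τ)²/(8τ²)) e^{-d(t-τ)²/(4τ)} dτ ≤ 4 + (U²/4) t`. -/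
theorem J1_case1_bound (U t ε : ℝ) (d : ℝ → ℝ)
    (hU : 0 ≤ U) (ht : 0 < t)
    (hLip : ∀ s₁ ∈ Set.Icc (0:ℝ) t, ∀ s₂ ∈ Set.Icc (0:ℝ) t, |d s₁ - d s₂| ≤ U * |s₁ - s₂|)
    (hmin : IsLeast (d '' Set.Icc (0:ℝ) t) ε) (hε : 0 < ε) (hdt : d t ≤ 2 * ε) :
    (∫ τ in (0:ℝ)..t, (d (t - τ)) ^ 2 / (8 * τ ^ 2)
        * Real.exp (-(d (t - τ)) ^ 2 / (4 * τ)))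
      ≤ 4 + U ^ 2 / 4 * t := by
  set f : ℝ → ℝ := fun τ => (d (t - τ)) ^ 2 / (8 * τ ^ 2)
      * Real.exp (-(d (t - τ)) ^ 2 / (4 * τ)) with hf
  set g : ℝ → ℝ := fun τ => ε ^ 2 / τ ^ 2 * Real.exp (-ε ^ 2 / 4 * τ⁻¹) + U ^ 2 / 4 with hg
  -- continuity of d on [0,t]
  have hdc : ContinuousOn d (Set.Icc 0 t) := by
    have : LipschitzOnWith (Real.toNNReal U) d (Set.Icc 0 t) := by
      apply LipschitzOnWith.of_dist_le_mul
      intro x hx y hy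
      rw [Real.dist_eq, Real.dist_eq, Real.coe_toNNReal U hU]
      exact hLip x hx y hy
    exact this.continuousOn
  -- lower bound on d
  have hdlow : ∀ s ∈ Set.Icc (0:ℝ) t, ε ≤ d s := fun s hs => hmin.2 ⟨s, hs, rfl⟩
  -- pointwise bounds on d (t - τ) for τ ∈ (0, t]
  have hmem : ∀ τ ∈ Set.Ioc (0:ℝ) t, t - τ ∈ Set.Icc (0:ℝ) t := by
    intro τ hτ
    exact ⟨by linarith [hτ.2], by linarith [hτ.1]⟩
  have hDlow : ∀ τ ∈ Set.Ioc (0:ℝ) t, ε ≤ d (t - τ) := fun τ hτ => hdlow _ (hmem τ hτ)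
  have hDup : ∀ τ ∈ Set.Ioc (0:ℝ) t, d (t - τ) ≤ 2 * ε + U * τ := by
    intro τ hτ
    have h := hLip (t - τ) (hmem τ hτ) t ⟨le_of_lt ht, le_refl t⟩
    have h2 : |t - τ - t| = τ := by rw [abs_of_nonpos (by linarith [hτ.1])]; ring
    rw [h2] at h
    have := abs_le.1 h
    linarith [this.1, this.2]
  -- uniform bound on f
  have hfC : ∀ τ ∈ Set.Ioc (0:ℝ) t, |f τ| ≤ 8 / ε ^ 2 := by
    intro τ hτ
    have hτ0 : (0:ℝ) < τ := hτ.1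
    set D := d (t - τ) with hD
    have hεD : ε ≤ D := hDlow τ hτ
    have hD0 : 0 < D := lt_of_lt_of_le hε hεD
    have hE : (0:ℝ) < Real.exp (-D ^ 2 / (4 * τ)) := Real.exp_pos _
    have hfτ : f τ = D ^ 2 / (8 * τ ^ 2) * Real.exp (-D ^ 2 / (4 * τ)) := rfl
    have habs : |f τ| = f τ := abs_of_nonneg (by rw [hfτ]; positivity)
    rw [habs, hfτ]
    have hx := sq_mul_exp_neg_le_four (D ^ 2 / (4 * τ)) (by positivity)
    have harg : -(D ^ 2 / (4 * τ)) = -D ^ 2 / (4 * τ) := by ring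
    rw [harg] at hx
    have h1 : D ^ 4 * Real.exp (-D ^ 2 / (4 * τ)) ≤ 64 * τ ^ 2 := by
      have h16 : (0:ℝ) < 16 * τ ^ 2 := by positivity
      have heq : (D ^ 2 / (4 * τ)) ^ 2 = D ^ 4 / (16 * τ ^ 2) := by ring
      rw [heq, div_mul_eq_mul_div, div_le_iff₀ h16] at hx
      nlinarith [hx]
    rw [div_mul_eq_mul_div, div_le_div_iff₀ (by positivity) (by positivity)]
    have hε2 : ε ^ 2 ≤ D ^ 2 := by nlinarith
    nlinarith [mul_le_mul_of_nonneg_left hε2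
      (by positivity : (0:ℝ) ≤ D ^ 2 * Real.exp (-D ^ 2 / (4 * τ))), h1, hE.le]
  -- continuity of f on subsets of (0, t]
  have hfcont : ∀ s ⊆ Set.Ioc (0:ℝ) t, ContinuousOn f s := by
    intro s hs
    have h1 : ContinuousOn (fun τ => d (t - τ)) s := by
      apply hdc.comp ((continuous_const.sub continuous_id).continuousOn)
      intro τ hτ
      exact hmem τ (hs hτ)
    have hne : ∀ τ ∈ s, (8 * τ ^ 2 : ℝ) ≠ 0 := by
      intro τ hτ; have := (hs hτ).1; positivity
    have hne4 : ∀ τ ∈ s, (4 * τ : ℝ) ≠ 0 := by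
      intro τ hτ; have := (hs hτ).1; positivity
    exact ((h1.pow 2).div (by fun_prop) hne).mul
      (((h1.pow 2).neg.div (by fun_prop) hne4).rexp)
  -- integrability of f on (0,t]
  have hfint : IntegrableOn f (Set.Ioc 0 t) := by
    constructor
    · exact (hfcont _ (subset_refl _)).aestronglyMeasurable measurableSet_Ioc
    · apply MeasureTheory.HasFiniteIntegral.of_bounded (C := 8 / ε ^ 2)
      rw [ae_restrict_iff' measurableSet_Ioc]
      filter_upwards with τ hτ
      simpa using hfC τ hτ
  have hfii : ∀ a b, 0 < a → a ≤ b → b ≤ t → IntervalIntegrable f volume a b := by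
    intro a b ha hab hbt
    rw [intervalIntegrable_iff_integrableOn_Ioc_of_le hab]
    exact hfint.mono_set (Set.Ioc_subset_Ioc (le_of_lt ha) hbt)
  have hfii0 : ∀ b, 0 < b → b ≤ t → IntervalIntegrable f volume 0 b := by
    intro b hb hbt
    rw [intervalIntegrable_iff_integrableOn_Ioc_of_le (le_of_lt hb)]
    exact hfint.mono_set (Set.Ioc_subset_Ioc le_rfl hbt)
  -- main bound over [a, t]
  have key : ∀ a, 0 < a → a ≤ t → (∫ τ in a..t, f τ) ≤ 4 + U ^ 2 / 4 * t := by
    intro a ha hat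
    -- pointwise comparison f ≤ g on [a, t]
    have hcomp : ∀ τ ∈ Set.Icc a t, f τ ≤ g τ := by
      intro τ hτm
      have hτ0 : (0:ℝ) < τ := lt_of_lt_of_le ha hτm.1
      have hτIoc : τ ∈ Set.Ioc (0:ℝ) t := ⟨hτ0, hτm.2⟩
      set D := d (t - τ) with hD
      have hεD : ε ≤ D := hDlow τ hτIoc
      have hDu : D ≤ 2 * ε + U * τ := hDup τ hτIoc
      have hD0 : 0 < D := lt_of_lt_of_le hε hεD
      have hEmono : Real.exp (-D ^ 2 / (4 * τ)) ≤ Real.exp (-ε ^ 2 / (4 * τ)) := by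
        apply Real.exp_le_exp.2
        exact (div_le_div_iff_of_pos_right (by positivity : (0:ℝ) < 4 * τ)).2 (by nlinarith)
      have hD2 : D ^ 2 ≤ 8 * ε ^ 2 + 2 * U ^ 2 * τ ^ 2 := by
        nlinarith [sq_nonneg (2 * ε - U * τ), mul_pos hτ0 hτ0]
      have hE1 : Real.exp (-ε ^ 2 / (4 * τ)) ≤ 1 := by
        apply Real.exp_le_one_iff.2
        rw [neg_div]
        exact neg_nonpos.2 (by positivity)
      have hEpos : (0:ℝ) < Real.exp (-ε ^ 2 / (4 * τ)) := Real.exp_pos _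
      have hstep1 : f τ ≤ (8 * ε ^ 2 + 2 * U ^ 2 * τ ^ 2) / (8 * τ ^ 2)
          * Real.exp (-ε ^ 2 / (4 * τ)) := by
        have hfτ : f τ = D ^ 2 / (8 * τ ^ 2) * Real.exp (-D ^ 2 / (4 * τ)) := rfl
        rw [hfτ]
        exact mul_le_mul ((div_le_div_iff_of_pos_right (by positivity : (0:ℝ) < 8 * τ ^ 2)).2 hD2)
          hEmono (Real.exp_pos _).le (by positivity)
      have heq : (8 * ε ^ 2 + 2 * U ^ 2 * τ ^ 2) / (8 * τ ^ 2)
          = ε ^ 2 / τ ^ 2 + U ^ 2 / 4 := by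
        field_simp; ring
      have hgτ : g τ = ε ^ 2 / τ ^ 2 * Real.exp (-ε ^ 2 / (4 * τ)) + U ^ 2 / 4 := by
        have : -ε ^ 2 / 4 * τ⁻¹ = -ε ^ 2 / (4 * τ) := by ring
        simp only [hg]; rw [this]
      rw [hgτ]
      have hq : (0:ℝ) ≤ ε ^ 2 / τ ^ 2 := by positivity
      calc f τ ≤ (8 * ε ^ 2 + 2 * U ^ 2 * τ ^ 2) / (8 * τ ^ 2)
            * Real.exp (-ε ^ 2 / (4 * τ)) := hstep1
        _ = (ε ^ 2 / τ ^ 2 + U ^ 2 / 4) * Real.exp (-ε ^ 2 / (4 * τ)) := by rw [heq]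
        _ ≤ ε ^ 2 / τ ^ 2 * Real.exp (-ε ^ 2 / (4 * τ)) + U ^ 2 / 4 := by nlinarith
    -- continuity / integrability of g on [a, t]
    have hgc : ContinuousOn g (Set.uIcc a t) := by
      rw [Set.uIcc_of_le hat]
      have hne : ∀ τ ∈ Set.Icc a t, (τ:ℝ) ^ 2 ≠ 0 := fun τ hτ => by
        have := lt_of_lt_of_le ha hτ.1; positivity
      have hne0 : ∀ τ ∈ Set.Icc a t, (τ:ℝ) ≠ 0 := fun τ hτ =>
        ne_of_gt (lt_of_lt_of_le ha hτ.1)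
      exact ((continuousOn_const.div (by fun_prop) hne).mul
        ((continuousOn_const.mul (continuousOn_inv₀.mono hne0)).rexp)).add continuousOn_const
    have hgint : IntervalIntegrable g volume a t := hgc.intervalIntegrable
    -- FTC for g
    set G : ℝ → ℝ := fun τ => 4 * Real.exp (-ε ^ 2 / 4 * τ⁻¹) + U ^ 2 / 4 * τ with hG
    have hderiv : ∀ τ ∈ Set.uIcc a t, HasDerivAt G (g τ) τ := by
      intro τ hτ
      rw [Set.uIcc_of_le hat] at hτ
      have hτ0 : τ ≠ 0 := ne_of_gt (lt_of_lt_of_le ha hτ.1)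
      have h1 : HasDerivAt (fun x : ℝ => -ε ^ 2 / 4 * x⁻¹) (-ε ^ 2 / 4 * (-(τ ^ 2)⁻¹)) τ :=
        (hasDerivAt_inv hτ0).const_mul _
      have h2 := (h1.exp.const_mul 4).add ((hasDerivAt_id τ).const_mul (U ^ 2 / 4))
      convert h2 using 1
      · rfl
      · rfl
      · rfl
      rw [hg]
      field_simp
    have hGt : 4 * Real.exp (-ε ^ 2 / 4 * t⁻¹) + U ^ 2 / 4 * t ≤ 4 + U ^ 2 / 4 * t := by
      have : Real.exp (-ε ^ 2 / 4 * t⁻¹) ≤ 1 := by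
        apply Real.exp_le_one_iff.2
        have : (0:ℝ) ≤ ε ^ 2 / 4 * t⁻¹ := by positivity
        nlinarith
      nlinarith
    have hGa : 0 ≤ 4 * Real.exp (-ε ^ 2 / 4 * a⁻¹) + U ^ 2 / 4 * a := by
      have := Real.exp_pos (-ε ^ 2 / 4 * a⁻¹)
      nlinarith
    calc (∫ τ in a..t, f τ) ≤ ∫ τ in a..t, g τ :=
          intervalIntegral.integral_mono_on hat (hfii a t ha hat le_rfl) hgint hcomp
      _ = G t - G a := intervalIntegral.integral_eq_sub_of_hasDerivAt hderiv hgint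
      _ ≤ 4 + U ^ 2 / 4 * t := by simp only [hG]; linarith
  -- conclusion
  refine le_of_forall_pos_le_add ?_
  intro δ hδ
  set a := min t (δ * ε ^ 2 / 8) with ha
  have ha0 : 0 < a := lt_min ht (by positivity)
  have hat : a ≤ t := min_le_left _ _
  have hsplit : (∫ τ in (0:ℝ)..t, f τ)
      = (∫ τ in (0:ℝ)..a, f τ) + ∫ τ in a..t, f τ :=
    (intervalIntegral.integral_add_adjacent_intervals (hfii0 a ha0 hat)
      (hfii a t ha0 hat le_rfl)).symm
  have h1 : (∫ τ in (0:ℝ)..a, f τ) ≤ 8 / ε ^ 2 * a := by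
    have hb := intervalIntegral.norm_integral_le_of_norm_le_const (C := 8 / ε ^ 2)
      (f := f) (a := (0:ℝ)) (b := a) ?_
    · calc (∫ τ in (0:ℝ)..a, f τ) ≤ |∫ τ in (0:ℝ)..a, f τ| := le_abs_self _
        _ ≤ 8 / ε ^ 2 * |a - 0| := hb
        _ = 8 / ε ^ 2 * a := by rw [sub_zero, abs_of_pos ha0]
    · intro x hx
      rw [Set.uIoc_of_le (le_of_lt ha0)] at hx
      simpa using hfC x ⟨hx.1, le_trans hx.2 hat⟩
  have h2 : 8 / ε ^ 2 * a ≤ δ := by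
    have hale : a ≤ δ * ε ^ 2 / 8 := min_le_right _ _
    rw [div_mul_eq_mul_div, div_le_iff₀ (by positivity : (0:ℝ) < ε ^ 2)]
    calc 8 * a ≤ 8 * (δ * ε ^ 2 / 8) := by linarith
      _ = δ * ε ^ 2 := by ring
  have h3 := key a ha0 hat
  rw [hsplit]
  linarith
end
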